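/- arXiv:1707.03163 — 3 statements merged into one kernel-verified Lean document; each statement's English description precedes it below -/
import Mathlib

section
/- (Integrability consequence of condition (C), Remark 1.3(1).) Let c : (0,∞) → (0,∞) be C¹ with c' > 0 on (0,∞) and x ↦ c(x)/c'(x) concave on (0,∞), and set u(0,x) := ∫₀ˣ c(y) dy for x > 0. Then there exists κ₁ > 0 such that every nonnegative measurable function f on ℝ^d with u(0, f) ∈ L¹(γ_d) satisfies f ∈ L^{1+1/κ₁}(γ_d); in particular f ∈ L¹(γ_d). -/
open MeasureTheory Real

lemma key_lemma (c : ℝ → ℝ)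
    (hc_pos : ∀ x > 0, 0 < c x)
    (hc_smooth : ContDiffOn ℝ 1 c (Set.Ioi 0))
    (hc_deriv_pos : ∀ x > 0, 0 < deriv c x)
    (hc_concave : ConcaveOn ℝ (Set.Ioi 0) (fun x => c x / deriv c x)) :
    ∃ A > (0:ℝ), ∀ t : ℝ, 0 ≤ t →
      t ^ ((1:ℝ) + 1/A) ≤ 1 + ((1 + 1/A) / c 1) * ∫ y in Set.Ioo 0 t, c y := by
  have hc1 : 0 < c 1 := hc_pos 1 one_pos
  have hd1 : 0 < deriv c 1 := hc_deriv_pos 1 one_pos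
  set A : ℝ := 2 * (c 1 / deriv c 1) with hA
  have hApos : 0 < A := by positivity
  have hp : (0:ℝ) < 1 + 1/A := by positivity
  set p : ℝ := 1 + 1/A with hpdef
  -- Step 1: concavity bound
  have step1 : ∀ t ≥ (1:ℝ), c t / deriv c t ≤ A * t := by
    intro t ht
    have ht2 : (0:ℝ) < t - 1/2 := by linarith
    set a : ℝ := (t - 1) / (t - 1/2) with ha_def
    set b : ℝ := (1/2) / (t - 1/2) with hb_def
    have ha : 0 ≤ a := by apply div_nonneg <;> linarith
    have hb : 0 < b := by positivity
    have hab : a + b = 1 := by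
      rw [ha_def, hb_def, ← add_div, div_eq_one_iff_eq ht2.ne']; ring
    have hmem1 : (1/2:ℝ) ∈ Set.Ioi (0:ℝ) := by norm_num
    have hmem2 : t ∈ Set.Ioi (0:ℝ) := by simp; linarith
    have hkey := hc_concave.2 hmem1 hmem2 ha hb.le hab
    have hcomb : a • (1/2:ℝ) + b • t = 1 := by
      simp only [smul_eq_mul, ha_def, hb_def]
      rw [div_mul_eq_mul_div, div_mul_eq_mul_div, ← add_div,
        div_eq_one_iff_eq ht2.ne']; ring
    rw [hcomb] at hkey
    simp only [smul_eq_mul] at hkey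
    have hg2 : 0 < c (1/2) / deriv c (1/2) := by
      apply div_pos (hc_pos _ (by norm_num)) (hc_deriv_pos _ (by norm_num))
    have h1 : b * (c t / deriv c t) ≤ c 1 / deriv c 1 := by nlinarith
    have : c t / deriv c t ≤ (c 1 / deriv c 1) / b := (le_div_iff₀ hb).2 (by linarith [h1])
    calc c t / deriv c t ≤ (c 1 / deriv c 1) / b := this
      _ = (c 1 / deriv c 1) * (2 * (t - 1/2)) := by
          rw [hb_def]; field_simp
      _ ≤ A * t := by rw [hA]; nlinarith [div_pos hc1 hd1]
  -- differentiability facts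
  have hdiffOn : DifferentiableOn ℝ c (Set.Ioi 0) := hc_smooth.differentiableOn one_ne_zero
  have hca : ∀ x ∈ Set.Ioi (0:ℝ), HasDerivAt c (deriv c x) x := fun x hx =>
    ((hdiffOn x hx).differentiableAt (isOpen_Ioi.mem_nhds hx)).hasDerivAt
  set h : ℝ → ℝ := fun x => Real.log (c x) - (1/A) * Real.log x with hh
  have hder : ∀ x ∈ Set.Ioi (1:ℝ), HasDerivAt h (deriv c x / c x - (1/A) * x⁻¹) x := by
    intro x hx
    have hx0 : (0:ℝ) < x := lt_trans one_pos hx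
    exact ((hca x hx0).log (hc_pos x hx0).ne').sub
      (HasDerivAt.const_mul (1/A) (Real.hasDerivAt_log hx0.ne'))
  have hmono : MonotoneOn h (Set.Ici 1) := by
    apply monotoneOn_of_deriv_nonneg (convex_Ici 1)
    · refine ((hc_smooth.continuousOn.mono (fun x hx => ?_)).log
        (fun x hx => (hc_pos x (lt_of_lt_of_le one_pos hx)).ne')).sub
        (continuousOn_const.mul (Real.continuousOn_log.mono (fun x hx => ?_)))
      · exact lt_of_lt_of_le one_pos (show (1:ℝ) ≤ x from hx)
      · exact Set.mem_compl_singleton_iff.2 (lt_of_lt_of_le one_pos hx).ne'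
    · intro x hx
      rw [interior_Ici] at hx
      exact ((hder x hx).differentiableAt).differentiableWithinAt
    · intro x hx
      rw [interior_Ici] at hx
      have hx0 : (0:ℝ) < x := lt_trans one_pos hx
      have hcx : 0 < c x := hc_pos x hx0
      have hdx : 0 < deriv c x := hc_deriv_pos x hx0
      rw [(hder x hx).deriv]
      have hs : c x ≤ A * x * deriv c x := (div_le_iff₀ hdx).1 (step1 x (le_of_lt hx))
      have hAx : 0 < A * x := by positivity
      have h2 : 1/A * x⁻¹ * c x ≤ deriv c x := by
        have he : 1/A * x⁻¹ = (A*x)⁻¹ := by rw [mul_inv, one_div]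
        rw [he, inv_mul_le_iff₀ hAx]
        linarith
      have h3 : 1/A * x⁻¹ ≤ deriv c x / c x := (le_div_iff₀ hcx).2 h2
      linarith
  have clower : ∀ t : ℝ, 1 ≤ t → c 1 * t ^ ((1:ℝ)/A) ≤ c t := by
    intro t ht
    have ht0 : (0:ℝ) < t := lt_of_lt_of_le one_pos ht
    have hm := hmono Set.self_mem_Ici ht ht
    simp only [hh, Real.log_one, mul_zero, sub_zero] at hm
    have hlog : Real.log (c 1 * t ^ ((1:ℝ)/A)) ≤ Real.log (c t) := by
      rw [Real.log_mul hc1.ne' (Real.rpow_pos_of_pos ht0 _).ne', Real.log_rpow ht0]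
      linarith
    exact (Real.log_le_log_iff (by positivity) (hc_pos t ht0)).1 hlog
  have hcmono : StrictMonoOn c (Set.Ioi 0) := by
    apply strictMonoOn_of_deriv_pos (convex_Ioi 0) hc_smooth.continuousOn
    intro x hx
    rw [interior_Ioi] at hx
    exact hc_deriv_pos x hx
  refine ⟨A, hApos, fun t ht0 => ?_⟩
  rcases le_or_gt t 1 with h1 | h1
  · have hle : t ^ p ≤ 1 := Real.rpow_le_one ht0 h1 hp.le
    have hI : 0 ≤ ∫ y in Set.Ioo 0 t, c y :=
      setIntegral_nonneg measurableSet_Ioo (fun y hy => (hc_pos y hy.1).le)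
    have hK : 0 ≤ p / c 1 := by positivity
    nlinarith
  · have ht0' : (0:ℝ) < t := by linarith
    have hInt0t : IntegrableOn c (Set.Ioo 0 t) := by
      refine Integrable.mono' (g := fun _ => c t)
        (integrableOn_const measure_Ioo_lt_top.ne)
        ((hc_smooth.continuousOn.mono Set.Ioo_subset_Ioi_self).aestronglyMeasurable
          measurableSet_Ioo) ?_
      refine (ae_restrict_iff' measurableSet_Ioo).2 (ae_of_all _ fun y hy => ?_)
      rw [Real.norm_eq_abs, abs_of_pos (hc_pos y hy.1)]
      exact (hcmono hy.1 (Set.mem_Ioi.2 ht0') hy.2).le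
    have hsub : Set.Ioo 1 t ⊆ Set.Ioo 0 t := Set.Ioo_subset_Ioo (by norm_num) le_rfl
    have hIcc : Set.Icc (1:ℝ) t ⊆ Set.Ioi 0 := fun y hy => lt_of_lt_of_le one_pos hy.1
    have hIntc1t : IntegrableOn c (Set.Ioo 1 t) :=
      ((hc_smooth.continuousOn.mono hIcc).integrableOn_Icc).mono_set Set.Ioo_subset_Icc_self
    have hIntg : IntegrableOn (fun y => c 1 * y ^ ((1:ℝ)/A)) (Set.Ioo 1 t) := by
      refine (ContinuousOn.integrableOn_Icc ?_).mono_set Set.Ioo_subset_Icc_self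
      exact continuousOn_const.mul (fun y hy =>
        (Real.continuousAt_rpow_const y (1/A) (Or.inr (by positivity))).continuousWithinAt)
    have hch1 : ∫ y in Set.Ioo 1 t, c 1 * y ^ ((1:ℝ)/A) ≤ ∫ y in Set.Ioo 1 t, c y :=
      setIntegral_mono_on hIntg hIntc1t measurableSet_Ioo (fun y hy => clower y hy.1.le)
    have hch2 : ∫ y in Set.Ioo 1 t, c y ≤ ∫ y in Set.Ioo 0 t, c y :=
      setIntegral_mono_set hInt0t
        ((ae_restrict_iff' measurableSet_Ioo).2 (ae_of_all _ fun y hy => (hc_pos y hy.1).le))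
        (HasSubset.Subset.eventuallyLE hsub)
    have hcomp : ∫ y in Set.Ioo 1 t, c 1 * y ^ ((1:ℝ)/A) = c 1 * ((t ^ p - 1) / p) := by
      rw [integral_const_mul, ← MeasureTheory.integral_Ioc_eq_integral_Ioo,
        ← intervalIntegral.integral_of_le h1.le,
        integral_rpow (Or.inl (lt_of_lt_of_le (by norm_num : (-1:ℝ) < 0) (by positivity : (0:ℝ) ≤ 1/A))), Real.one_rpow,
        show (1:ℝ)/A + 1 = p by rw [hpdef]; ring]
    have hchain : c 1 * ((t ^ p - 1) / p) ≤ ∫ y in Set.Ioo 0 t, c y := by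
      rw [← hcomp]; exact le_trans hch1 hch2
    have hfin : t ^ p - 1 ≤ (p / c 1) * ∫ y in Set.Ioo 0 t, c y := by
      have hmul := mul_le_mul_of_nonneg_left hchain (by positivity : (0:ℝ) ≤ p / c 1)
      calc t ^ p - 1 = (p / c 1) * (c 1 * ((t ^ p - 1)/p)) := by field_simp
        _ ≤ _ := hmul
    linarith


/-- The standard Gaussian measure on `ℝ^d`. -/
noncomputable def stdGaussian (d : ℕ) : Measure (Fin d → ℝ) :=
  Measure.pi fun _ => ProbabilityTheory.gaussianReal 0 1

/-- Remark 1.3(1): integrability consequence of condition (C). If `c' > 0` and `c/c'`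
is concave on `(0,∞)`, and `u(0,x) = ∫₀ˣ c(y) dy`, then there is `κ₁ > 0` such that
every nonnegative measurable `f` with `u(0,f) ∈ L¹(γ_d)` lies in `L^{1+1/κ₁}(γ_d)`,
in particular in `L¹(γ_d)`. -/
theorem integrability_from_condition_C (d : ℕ) (hd : 0 < d) (c : ℝ → ℝ)
    (hc_pos : ∀ x > 0, 0 < c x)
    (hc_smooth : ContDiffOn ℝ 1 c (Set.Ioi 0))
    (hc_deriv_pos : ∀ x > 0, 0 < deriv c x)
    (hc_concave : ConcaveOn ℝ (Set.Ioi 0) (fun x => c x / deriv c x)) :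
    ∃ κ₁ > (0 : ℝ), ∀ f : (Fin d → ℝ) → ℝ, Measurable f → (∀ x, 0 ≤ f x) →
      Integrable (fun x => ∫ y in Set.Ioo 0 (f x), c y) (stdGaussian d) →
      Integrable (fun x => |f x| ^ ((1 : ℝ) + 1 / κ₁)) (stdGaussian d) ∧
        Integrable f (stdGaussian d) := by
  obtain ⟨A, hApos, hkey⟩ := key_lemma c hc_pos hc_smooth hc_deriv_pos hc_concave
  have hc1 : 0 < c 1 := hc_pos 1 one_pos
  set p : ℝ := 1 + 1/A with hpdef
  have hp : 0 < p := by positivity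
  set K : ℝ := p / c 1 with hK
  have hK0 : 0 ≤ K := by positivity
  haveI : IsProbabilityMeasure (stdGaussian d) := by
    unfold stdGaussian; infer_instance
  refine ⟨A, hApos, fun f hf hf0 hint => ?_⟩
  have hbound : ∀ x, |f x| ^ p ≤ 1 + K * ∫ y in Set.Ioo 0 (f x), c y := fun x => by
    rw [abs_of_nonneg (hf0 x)]; exact hkey (f x) (hf0 x)
  have hBint : Integrable (fun x => 1 + K * ∫ y in Set.Ioo 0 (f x), c y) (stdGaussian d) :=
    (integrable_const 1).add (hint.const_mul K)
  have hg : Continuous fun y : ℝ => |y| ^ p :=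
    continuous_iff_continuousAt.2 fun y =>
      (Real.continuousAt_rpow_const _ p (Or.inr hp.le)).comp continuous_abs.continuousAt
  have hm : Measurable fun x => |f x| ^ p := hg.measurable.comp hf
  have hIp : Integrable (fun x => |f x| ^ p) (stdGaussian d) := by
    refine hBint.mono' hm.aestronglyMeasurable (ae_of_all _ fun x => ?_)
    rw [Real.norm_eq_abs, abs_of_nonneg (Real.rpow_nonneg (abs_nonneg _) p)]
    exact hbound x
  refine ⟨hIp, ?_⟩
  refine ((integrable_const 1).add hIp).mono' hf.aestronglyMeasurable (ae_of_all _ fun x => ?_)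
  rw [Real.norm_eq_abs, abs_of_nonneg (hf0 x)]
  simp only [Pi.add_apply]
  have hrp : 0 ≤ |f x| ^ p := Real.rpow_nonneg (abs_nonneg _) p
  rcases le_or_gt (f x) 1 with hle | hgt
  · linarith
  · have h1 : f x = f x ^ (1:ℝ) := (Real.rpow_one _).symm
    have h2 : f x ^ (1:ℝ) ≤ f x ^ p :=
      Real.rpow_le_rpow_of_exponent_le hgt.le (by simp [hpdef]; positivity)
    rw [Real.rpow_one] at h2
    rw [abs_of_nonneg (hf0 x)]
    linarith [h2]
end

section
/- (Lemma 4.2: positivity and concavity of φ.) Let c : (0,∞) → (0,∞) be C¹ with c' > 0 on (0,∞) and x ↦ c(x)/c'(x) concave on (0,∞). For 0 < t ≤ 1 set u(t,x) := ∫₀ˣ c(y)^{1/t} dy for x > 0, let v(t,·) be the inverse function of x ↦ u(t,x) on (0,∞), and define φ(t,x) := t² · (c(v(t,x))/c'(v(t,x))) · c(v(t,x))^{1/t} for x > 0. Then for every 0 < t ≤ 1 the function x ↦ φ(t,x) is positive and concave on (0,∞). -/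
open MeasureTheory Real

set_option maxHeartbeats 2000000 in
/-- Lemma 4.2: positivity and concavity of `φ(t,·)`. Under condition (C) on `c`, for
`0 < t ≤ 1`, with `u(t,x) = ∫₀ˣ c(y)^{1/t} dy`, `v(t,·)` its inverse, and
`φ(t,x) = t² (c(v(t,x))/c'(v(t,x))) c(v(t,x))^{1/t}`, the function `x ↦ φ(t,x)`
is positive and concave on `(0,∞)`. -/
theorem phi_pos_concave (c : ℝ → ℝ)
    (hc_pos : ∀ x > 0, 0 < c x)
    (hc_smooth : ContDiffOn ℝ 1 c (Set.Ioi 0))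
    (hc_deriv_pos : ∀ x > 0, 0 < deriv c x)
    (hc_concave : ConcaveOn ℝ (Set.Ioi 0) (fun x => c x / deriv c x))
    (t : ℝ) (ht0 : 0 < t) (ht1 : t ≤ 1)
    (u : ℝ → ℝ) (hu : ∀ x, u x = ∫ y in Set.Ioo 0 x, c y ^ (1 / t))
    (v : ℝ → ℝ) (hv : Set.InvOn v u (Set.Ioi 0) (Set.Ioi 0)) :
    (∀ x > 0, 0 < t ^ 2 * (c (v x) / deriv c (v x)) * c (v x) ^ (1 / t)) ∧
    ConcaveOn ℝ (Set.Ioi 0)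
      (fun x => t ^ 2 * (c (v x) / deriv c (v x)) * c (v x) ^ (1 / t)) := by
  have htne : t ≠ 0 := ht0.ne'
  set p : ℝ := 1 / t with hpdef
  have hp : (0:ℝ) < p := by positivity
  -- continuity of `c` and `deriv c` on `Ioi 0`
  have hcont : ContinuousOn c (Set.Ioi 0) := hc_smooth.continuousOn
  have hdcont : ContinuousOn (deriv c) (Set.Ioi 0) := by
    have h := hc_smooth.continuousOn_derivWithin (uniqueDiffOn_Ioi 0) le_rfl
    exact h.congr fun x hx => (derivWithin_of_isOpen isOpen_Ioi hx).symm
  have hcdiff : ∀ x ∈ Set.Ioi (0:ℝ), HasDerivAt c (deriv c x) x := fun x hx =>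
    ((hc_smooth.differentiableOn one_ne_zero x hx).differentiableAt
      (Ioi_mem_nhds hx)).hasDerivAt
  have hcmono : StrictMonoOn c (Set.Ioi 0) := by
    apply strictMonoOn_of_deriv_pos (convex_Ioi 0) hcont
    intro x hx
    rw [interior_Ioi] at hx
    exact hc_deriv_pos x hx
  -- integrability of `c ^ p` on `Ioo 0 b`
  have hfpos : ∀ y ∈ Set.Ioi (0:ℝ), 0 < c y ^ p := fun y hy =>
    Real.rpow_pos_of_pos (hc_pos y hy) p
  have hfcont : ContinuousOn (fun y => c y ^ p) (Set.Ioi 0) :=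
    hcont.rpow_const fun x hx => Or.inl (hc_pos x hx).ne'
  have hint0 : ∀ b : ℝ, 0 < b → IntegrableOn (fun y => c y ^ p) (Set.Ioo 0 b) := by
    intro b hb
    have hmeas : AEStronglyMeasurable (fun y => c y ^ p) (volume.restrict (Set.Ioo 0 b)) :=
      (hfcont.mono (Set.Ioo_subset_Ioi_self)).aestronglyMeasurable measurableSet_Ioo
    refine Integrable.mono' (g := fun _ => c b ^ p)
      (integrableOn_const measure_Ioo_lt_top.ne) hmeas ?_
    rw [ae_restrict_iff' measurableSet_Ioo]
    filter_upwards with y hy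
    have hy0 : 0 < c y := hc_pos y hy.1
    have hcy : c y ≤ c b := (hcmono.monotoneOn) hy.1 hb hy.2.le
    rw [Real.norm_eq_abs, abs_of_pos (Real.rpow_pos_of_pos hy0 p)]
    exact Real.rpow_le_rpow hy0.le hcy hp.le
  -- difference of `u` as an interval integral
  have hudiff : ∀ a b : ℝ, 0 < a → a ≤ b → u b - u a = ∫ y in a..b, c y ^ p := by
    intro a b ha hab
    have hb : 0 < b := lt_of_lt_of_le ha hab
    rcases eq_or_lt_of_le hab with rfl | hab'
    · simp
    have hsplit : Set.Ioo 0 a ∪ Set.Ico a b = Set.Ioo 0 b :=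
      Set.Ioo_union_Ico_eq_Ioo ha hab
    have h1 : IntegrableOn (fun y => c y ^ p) (Set.Ioo 0 a) := hint0 a ha
    have h2 : IntegrableOn (fun y => c y ^ p) (Set.Ico a b) :=
      (hint0 b hb).mono_set (fun y hy => ⟨lt_of_lt_of_le ha hy.1, hy.2⟩)
    have hdisj : Disjoint (Set.Ioo 0 a) (Set.Ico a b) := by
      apply Set.disjoint_left.2
      intro y hy hy'
      exact absurd hy.2 (not_lt.2 hy'.1)
    have hun := setIntegral_union hdisj measurableSet_Ico h1 h2
      (f := fun y => c y ^ p) (μ := volume)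
    rw [hsplit] at hun
    rw [hu b, hu a, hun, intervalIntegral.integral_of_le hab,
      integral_Ioc_eq_integral_Ioo, integral_Ico_eq_integral_Ioo]
    ring
  have humono : ∀ a b : ℝ, 0 < a → a ≤ b → u a ≤ u b := by
    intro a b ha hab
    have h := hudiff a b ha hab
    have hnn : 0 ≤ ∫ y in a..b, c y ^ p := by
      apply intervalIntegral.integral_nonneg hab
      intro y hy
      exact (Real.rpow_pos_of_pos (hc_pos y (lt_of_lt_of_le ha hy.1)) p).le
    linarith
  -- positivity of u
  have hupos : ∀ x : ℝ, 0 < x → 0 < u x := by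
    intro x hx
    have hx2 : 0 < x / 2 := by linarith
    have h1 : 0 ≤ u (x / 2) := by
      rw [hu]
      apply setIntegral_nonneg measurableSet_Ioo
      intro y hy
      exact (Real.rpow_pos_of_pos (hc_pos y hy.1) p).le
    have h2 : u x - u (x / 2) = ∫ y in (x/2)..x, c y ^ p := hudiff _ _ hx2 (by linarith)
    have h3 : 0 < ∫ y in (x/2)..x, c y ^ p := by
      apply intervalIntegral.intervalIntegral_pos_of_pos_on
      · apply ContinuousOn.intervalIntegrable
        apply hfcont.mono
        rw [Set.uIcc_of_le (by linarith : x/2 ≤ x)]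
        intro y hy
        exact lt_of_lt_of_le hx2 hy.1
      · intro y hy
        exact Real.rpow_pos_of_pos (hc_pos y (lt_trans hx2 hy.1)) p
      · linarith
    linarith
  -- properties of v
  have hvpos : ∀ y : ℝ, 0 < y → 0 < v y := by
    intro y hy
    by_contra h
    push_neg at h
    have huv : u (v y) = y := hv.2 (Set.mem_Ioi.2 hy)
    have hempty : Set.Ioo (0:ℝ) (v y) = ∅ := Set.Ioo_eq_empty (by intro h'; linarith)
    have hz : u (v y) = 0 := by rw [hu, hempty]; simp
    rw [huv] at hz
    linarith
  have hvmono : ∀ y z : ℝ, 0 < y → y < z → v y < v z := by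
    intro y z hy hyz
    have hz : 0 < z := lt_trans hy hyz
    by_contra h
    push_neg at h
    have h2 := humono (v z) (v y) (hvpos z hz) h
    rw [hv.2 (Set.mem_Ioi.2 hy), hv.2 (Set.mem_Ioi.2 hz)] at h2
    linarith
  constructor
  · -- positivity
    intro x hx
    have hvx := hvpos x hx
    exact mul_pos (mul_pos (pow_pos ht0 2)
      (div_pos (hc_pos _ hvx) (hc_deriv_pos _ hvx)))
      (Real.rpow_pos_of_pos (hc_pos _ hvx) _)
  · -- concavity via the slope criterion
    apply concaveOn_of_slope_anti_adjacent (convex_Ioi 0)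
    intro x y z hx hz hxy hyz
    simp only [Set.mem_Ioi] at hx hz
    have hy : (0:ℝ) < y := lt_trans hx hxy
    set q : ℝ → ℝ := fun w => c w / deriv c w with hqdef
    set w1 := v x with hw1def
    set w2 := v y with hw2def
    set w3 := v z with hw3def
    have hw1 : 0 < w1 := hvpos x hx
    have hw2 : 0 < w2 := hvpos y hy
    have hw3 : 0 < w3 := hvpos z hz
    have hw12 : w1 < w2 := hvmono x y hx hxy
    have hw23 : w2 < w3 := hvmono y z hy hyz
    have hu1 : u w1 = x := hv.2 (Set.mem_Ioi.2 hx)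
    have hu2 : u w2 = y := hv.2 (Set.mem_Ioi.2 hy)
    have hu3 : u w3 = z := hv.2 (Set.mem_Ioi.2 hz)
    set σ : ℝ := (q w3 - q w2) / (w3 - w2) with hσdef
    set l : ℝ → ℝ := fun w => q w2 + σ * (w - w2) with hldef
    have h32 : (0:ℝ) < w3 - w2 := by linarith
    have hl2 : l w2 = q w2 := by simp [hldef]
    have hl3 : l w3 = q w3 := by
      simp only [hldef, hσdef]
      field_simp
      ring
    -- chord inequalities from concavity of q
    have chord_le : ∀ w ∈ Set.Icc w2 w3, l w ≤ q w := by
      intro w hw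
      have hA : 0 ≤ (w3 - w) / (w3 - w2) := div_nonneg (by linarith [hw.2]) h32.le
      have hB : 0 ≤ (w - w2) / (w3 - w2) := div_nonneg (by linarith [hw.1]) h32.le
      have hAB : (w3 - w) / (w3 - w2) + (w - w2) / (w3 - w2) = 1 := by
        field_simp
        ring
      have h := hc_concave.2 (Set.mem_Ioi.2 hw2) (Set.mem_Ioi.2 hw3) hA hB hAB
      simp only [smul_eq_mul] at h
      have hcomb : (w3 - w) / (w3 - w2) * w2 + (w - w2) / (w3 - w2) * w3 = w := by
        field_simp
        ring
      rw [hcomb] at h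
      have heq : l w = (w3 - w) / (w3 - w2) * q w2 + (w - w2) / (w3 - w2) * q w3 := by
        simp only [hldef, hσdef]
        field_simp
        ring
      rw [heq]
      exact h
    have chord_ge : ∀ w, 0 < w → w ≤ w2 → q w ≤ l w := by
      intro w hw0 hw
      rcases eq_or_lt_of_le hw with rfl | hww2
      · rw [hl2]
      have h3w : (0:ℝ) < w3 - w := by linarith
      have hA : 0 ≤ (w3 - w2) / (w3 - w) := div_nonneg h32.le h3w.le
      have hB : 0 ≤ (w2 - w) / (w3 - w) := div_nonneg (by linarith) h3w.le
      have hAB : (w3 - w2) / (w3 - w) + (w2 - w) / (w3 - w) = 1 := by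
        field_simp
        ring
      have h := hc_concave.2 (Set.mem_Ioi.2 hw0) (Set.mem_Ioi.2 hw3) hA hB hAB
      simp only [smul_eq_mul] at h
      have hcomb : (w3 - w2) / (w3 - w) * w + (w2 - w) / (w3 - w) * w3 = w2 := by
        field_simp
        ring
      rw [hcomb] at h
      -- h : (w3-w2)/(w3-w) * q w + (w2-w)/(w3-w) * q w3 ≤ q w2
      have h' : (w3 - w2) * q w + (w2 - w) * q w3 ≤ (w3 - w) * q w2 := by
        have e1 : (w3 - w2) / (w3 - w) * q w + (w2 - w) / (w3 - w) * q w3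
            = ((w3 - w2) * q w + (w2 - w) * q w3) / (w3 - w) := by ring
        rw [e1, div_le_iff₀ h3w] at h
        nlinarith [h]
      have key : l w - q w =
          ((w3 - w) * q w2 - (w2 - w) * q w3 - (w3 - w2) * q w) / (w3 - w2) := by
        simp only [hldef, hσdef]
        field_simp
        ring
      have hnum : 0 ≤ (w3 - w) * q w2 - (w2 - w) * q w3 - (w3 - w2) * q w := by linarith
      have := div_nonneg hnum h32.le
      linarith [key ▸ this]
    -- the FTC identity for Φ(w) = t² l(w) c(w)^p
    have hcont_int : ∀ a b : ℝ, 0 < a → a < b →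
        ContinuousOn (fun w => t ^ 2 * (σ * c w ^ p + l w * (deriv c w * p * c w ^ (p - 1))))
          (Set.Icc a b) := by
      intro a b ha hab
      have hIcc : Set.Icc a b ⊆ Set.Ioi 0 := fun w hw => lt_of_lt_of_le ha hw.1
      have hc1 : ContinuousOn (fun w => c w ^ p) (Set.Icc a b) := hfcont.mono hIcc
      have hc2 : ContinuousOn (fun w => c w ^ (p - 1)) (Set.Icc a b) :=
        (hcont.mono hIcc).rpow_const fun w hw => Or.inl (hc_pos w (hIcc hw)).ne'
      have hc3 : ContinuousOn (deriv c) (Set.Icc a b) := hdcont.mono hIcc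
      have hc4 : ContinuousOn l (Set.Icc a b) :=
        (continuous_const.add (continuous_const.mul
          (continuous_id.sub continuous_const))).continuousOn
      exact ((hc1.const_smul σ).add
        (hc4.mul ((hc3.mul continuousOn_const).mul hc2))).const_smul (t ^ 2)
    have hftc : ∀ a b : ℝ, 0 < a → a < b →
        t ^ 2 * (l b * c b ^ p) - t ^ 2 * (l a * c a ^ p)
          = ∫ w in a..b, t ^ 2 * (σ * c w ^ p + l w * (deriv c w * p * c w ^ (p - 1))) := by
      intro a b ha hab
      have hIcc : Set.Icc a b ⊆ Set.Ioi 0 := fun w hw => lt_of_lt_of_le ha hw.1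
      symm
      apply intervalIntegral.integral_eq_sub_of_hasDerivAt
        (f := fun w => t ^ 2 * (l w * c w ^ p))
      · intro w hw
        rw [Set.uIcc_of_le hab.le] at hw
        have hw0 : 0 < w := hIcc hw
        have hcw := hcdiff w hw0
        have hcwpos := hc_pos w hw0
        have h2 : HasDerivAt (fun y => c y ^ p) (deriv c w * p * c w ^ (p - 1)) w :=
          hcw.rpow_const (Or.inl hcwpos.ne')
        have h1 : HasDerivAt l σ w := by
          have := (((hasDerivAt_id w).sub_const w2).const_mul σ).const_add (q w2)
          rw [mul_one] at this
          exact this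
        exact (h1.mul h2).const_mul (t ^ 2)
      · apply ContinuousOn.intervalIntegrable
        rw [Set.uIcc_of_le hab.le]
        exact hcont_int a b ha hab
    -- interval integrability of both integrands
    have hii : ∀ a b : ℝ, 0 < a → a < b →
        IntervalIntegrable (fun w => t ^ 2 * (σ * c w ^ p +
          l w * (deriv c w * p * c w ^ (p - 1)))) volume a b ∧
        IntervalIntegrable (fun w => (t ^ 2 * σ + t) * c w ^ p) volume a b := by
      intro a b ha hab
      have hIcc : Set.Icc a b ⊆ Set.Ioi 0 := fun w hw => lt_of_lt_of_le ha hw.1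
      have hc1 : ContinuousOn (fun w => c w ^ p) (Set.Icc a b) := hfcont.mono hIcc
      constructor
      · apply ContinuousOn.intervalIntegrable
        rw [Set.uIcc_of_le hab.le]
        exact hcont_int a b ha hab
      · apply ContinuousOn.intervalIntegrable
        rw [Set.uIcc_of_le hab.le]
        exact hc1.const_smul (t ^ 2 * σ + t)
    -- pointwise comparison, and the two slope bounds
    have hpt : t ^ 2 * p = t := by
      rw [hpdef]; field_simp
    have hcomp_le :
        t ^ 2 * (l w3 * c w3 ^ p) - t ^ 2 * (l w2 * c w2 ^ p) ≤ (t ^ 2 * σ + t) * (z - y) := by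
      have h := hftc w2 w3 hw2 hw23
      rw [h]
      have hconst : ∫ w in w2..w3, (t ^ 2 * σ + t) * c w ^ p
          = (t ^ 2 * σ + t) * (z - y) := by
        rw [intervalIntegral.integral_const_mul, ← hudiff w2 w3 hw2 hw23.le, hu2, hu3]
      rw [← hconst]
      apply intervalIntegral.integral_mono_on hw23.le (hii w2 w3 hw2 hw23).1
        (hii w2 w3 hw2 hw23).2
      intro w hw
      have hw0 : 0 < w := lt_of_lt_of_le hw2 hw.1
      have hcwpos := hc_pos w hw0
      have hdw := hc_deriv_pos w hw0
      have hlw : l w ≤ q w := chord_le w hw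
      have h4 : l w * deriv c w ≤ c w := by
        rw [hqdef] at hlw
        calc l w * deriv c w ≤ (c w / deriv c w) * deriv c w :=
              mul_le_mul_of_nonneg_right hlw hdw.le
          _ = c w := by field_simp
      have h5 : (0:ℝ) ≤ c w ^ (p - 1) := (Real.rpow_pos_of_pos hcwpos _).le
      have hcp : c w ^ (p - 1) * c w = c w ^ p := by
        rw [← Real.rpow_add_one hcwpos.ne' (p - 1)]
        ring_nf
      have h6 : c w ^ (p - 1) * (l w * deriv c w) ≤ c w ^ p := by
        calc c w ^ (p - 1) * (l w * deriv c w) ≤ c w ^ (p - 1) * c w :=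
              mul_le_mul_of_nonneg_left h4 h5
          _ = c w ^ p := hcp
      have h7 := mul_le_mul_of_nonneg_left h6 ht0.le
      have h8 : t ^ 2 * p * (c w ^ (p - 1) * (l w * deriv c w))
          = t * (c w ^ (p - 1) * (l w * deriv c w)) := by rw [hpt]
      nlinarith [h7, h8]
    have hcomp_ge :
        (t ^ 2 * σ + t) * (y - x) ≤ t ^ 2 * (l w2 * c w2 ^ p) - t ^ 2 * (l w1 * c w1 ^ p) := by
      have h := hftc w1 w2 hw1 hw12
      rw [h]
      have hconst : ∫ w in w1..w2, (t ^ 2 * σ + t) * c w ^ p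
          = (t ^ 2 * σ + t) * (y - x) := by
        rw [intervalIntegral.integral_const_mul, ← hudiff w1 w2 hw1 hw12.le, hu1, hu2]
      rw [← hconst]
      apply intervalIntegral.integral_mono_on hw12.le (hii w1 w2 hw1 hw12).2
        (hii w1 w2 hw1 hw12).1
      intro w hw
      have hw0 : 0 < w := lt_of_lt_of_le hw1 hw.1
      have hcwpos := hc_pos w hw0
      have hdw := hc_deriv_pos w hw0
      have hlw : q w ≤ l w := chord_ge w hw0 hw.2
      have h4 : c w ≤ l w * deriv c w := by
        rw [hqdef] at hlw
        calc c w = (c w / deriv c w) * deriv c w := by field_simp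
          _ ≤ l w * deriv c w := mul_le_mul_of_nonneg_right hlw hdw.le
      have h5 : (0:ℝ) ≤ c w ^ (p - 1) := (Real.rpow_pos_of_pos hcwpos _).le
      have hcp : c w ^ (p - 1) * c w = c w ^ p := by
        rw [← Real.rpow_add_one hcwpos.ne' (p - 1)]
        ring_nf
      have h6 : c w ^ p ≤ c w ^ (p - 1) * (l w * deriv c w) := by
        calc c w ^ p = c w ^ (p - 1) * c w := hcp.symm
          _ ≤ c w ^ (p - 1) * (l w * deriv c w) := mul_le_mul_of_nonneg_left h4 h5
      have h7 := mul_le_mul_of_nonneg_left h6 ht0.le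
      have h8 : t ^ 2 * p * (c w ^ (p - 1) * (l w * deriv c w))
          = t * (c w ^ (p - 1) * (l w * deriv c w)) := by rw [hpt]
      nlinarith [h7, h8]
    -- assemble the slope inequality
    have hzy : (0:ℝ) < z - y := by linarith
    have hyx : (0:ℝ) < y - x := by linarith
    have hphiz : t ^ 2 * (c (v z) / deriv c (v z)) * c (v z) ^ (1 / t)
        = t ^ 2 * (l w3 * c w3 ^ p) := by
      show t ^ 2 * q w3 * c w3 ^ p = t ^ 2 * (l w3 * c w3 ^ p)
      rw [hl3]; ring
    have hphiy : t ^ 2 * (c (v y) / deriv c (v y)) * c (v y) ^ (1 / t)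
        = t ^ 2 * (l w2 * c w2 ^ p) := by
      show t ^ 2 * q w2 * c w2 ^ p = t ^ 2 * (l w2 * c w2 ^ p)
      rw [hl2]; ring
    have hphix : t ^ 2 * (c (v x) / deriv c (v x)) * c (v x) ^ (1 / t)
        = t ^ 2 * (q w1 * c w1 ^ p) := by
      show t ^ 2 * q w1 * c w1 ^ p = t ^ 2 * (q w1 * c w1 ^ p)
      ring
    have hphix_ge : t ^ 2 * (q w1 * c w1 ^ p) ≤ t ^ 2 * (l w1 * c w1 ^ p) :=
      mul_le_mul_of_nonneg_left
        (mul_le_mul_of_nonneg_right (chord_ge w1 hw1 hw12.le) (hfpos w1 hw1).le)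
        (sq_nonneg t)
    rw [div_le_div_iff₀ hzy hyx]
    have hb1 : t ^ 2 * (c (v z) / deriv c (v z)) * c (v z) ^ (1 / t)
        - t ^ 2 * (c (v y) / deriv c (v y)) * c (v y) ^ (1 / t) ≤ (t ^ 2 * σ + t) * (z - y) := by
      rw [hphiz, hphiy]; exact hcomp_le
    have hb2 : (t ^ 2 * σ + t) * (y - x) ≤
        t ^ 2 * (c (v y) / deriv c (v y)) * c (v y) ^ (1 / t)
        - t ^ 2 * (c (v x) / deriv c (v x)) * c (v x) ^ (1 / t) := by
      rw [hphiy, hphix]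
      linarith [hcomp_ge, hphix_ge]
    nlinarith [mul_le_mul_of_nonneg_left hb2 hzy.le, mul_le_mul_of_nonneg_left hb1 hyx.le]
end

section
/- (Example 4.5(2), verification of condition (C).) Let α, β > 0, set ρ := β/α, and let a be a constant with a ≥ e^{2+ρ}. Define c(x) := (x+a)^α / (log(x+a))^β for x > 0. Then c is C¹ on (0,∞), c'(x) = α (x+a)^{α−1} (log(x+a) − ρ) / (log(x+a))^{β+1} > 0 for all x > 0, and the function x ↦ c(x)/c'(x) = (x+a)/α + (ρ/α)·(x+a)/(log(x+a) − ρ) is concave on (0,∞). -/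
open Real

/-- Example 4.5(2): verification of condition (C) for
`c(x) = (x+a)^α / (log(x+a))^β` with `α, β > 0`, `ρ = β/α` and `a ≥ e^{2+ρ}`. -/
theorem example_power_log_condition_C (α β : ℝ) (hα : 0 < α) (hβ : 0 < β)
    (ρ : ℝ) (hρ : ρ = β / α)
    (a : ℝ) (ha : Real.exp (2 + ρ) ≤ a)
    (c : ℝ → ℝ) (hc : ∀ x, c x = (x + a) ^ α / Real.log (x + a) ^ β) :
    ContDiffOn ℝ 1 c (Set.Ioi 0) ∧
    (∀ x > 0,
      deriv c x =
        α * (x + a) ^ (α - 1) * (Real.log (x + a) - ρ) / Real.log (x + a) ^ (β + 1) ∧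
      0 < deriv c x) ∧
    (∀ x > 0,
      c x / deriv c x = (x + a) / α + (ρ / α) * ((x + a) / (Real.log (x + a) - ρ))) ∧
    ConcaveOn ℝ (Set.Ioi 0)
      (fun x => (x + a) / α + (ρ / α) * ((x + a) / (Real.log (x + a) - ρ))) := by
  have hρ0 : 0 < ρ := hρ ▸ div_pos hβ hα
  have hρβ : α * ρ = β := by rw [hρ]; field_simp
  -- basic facts
  have hfacts : ∀ x : ℝ, 0 < x → 0 < x + a ∧ 2 + ρ < Real.log (x + a) := by
    intro x hx
    have hexp : (0:ℝ) < Real.exp (2 + ρ) := Real.exp_pos _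
    have ht : 0 < x + a := by linarith
    have h1 : Real.exp (2 + ρ) < x + a := by linarith
    exact ⟨ht, by simpa [Real.log_exp] using Real.log_lt_log hexp h1⟩
  have hceq : c = fun y => (y + a) ^ α / Real.log (y + a) ^ β := funext hc
  -- derivative of c
  have hderiv_c : ∀ x > (0:ℝ), HasDerivAt c
      (α * (x + a) ^ (α - 1) * (Real.log (x + a) - ρ) / Real.log (x + a) ^ (β + 1)) x := by
    intro x hx
    obtain ⟨ht, hL2⟩ := hfacts x hx
    have hL0 : 0 < Real.log (x + a) := by linarith
    have hu : HasDerivAt (fun y : ℝ => y + a) 1 x := (hasDerivAt_id x).add_const a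
    have hN : HasDerivAt (fun y : ℝ => (y + a) ^ α) (1 * α * (x + a) ^ (α - 1)) x :=
      hu.rpow_const (Or.inl ht.ne')
    have hLog : HasDerivAt (fun y : ℝ => Real.log (y + a)) (1 / (x + a)) x := hu.log ht.ne'
    have hDen : HasDerivAt (fun y : ℝ => Real.log (y + a) ^ β)
        (1 / (x + a) * β * Real.log (x + a) ^ (β - 1)) x :=
      hLog.rpow_const (Or.inl hL0.ne')
    have hLbne : Real.log (x + a) ^ β ≠ 0 := (Real.rpow_pos_of_pos hL0 β).ne'
    have hcd := hN.div hDen hLbne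
    rw [hceq]
    refine hcd.congr_deriv (Eq.symm ?_)
    rw [Real.rpow_sub_one ht.ne' α, Real.rpow_sub_one hL0.ne' β, Real.rpow_add_one hL0.ne' β]
    have hA : (x + a) ^ α ≠ 0 := (Real.rpow_pos_of_pos ht α).ne'
    field_simp
    linear_combination (-1) * hρβ
  have hD2 : ∀ x > (0:ℝ), 2 < Real.log (x + a) - ρ := fun x hx => by
    have := (hfacts x hx).2; linarith
  refine ⟨?_, ?_, ?_, ?_⟩
  · -- ContDiffOn
    intro x hx
    obtain ⟨ht, hL2⟩ := hfacts x hx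
    have hL0 : 0 < Real.log (x + a) := by linarith
    have h1 : ContDiffAt ℝ 1 (fun y : ℝ => y + a) x := (contDiff_id.add contDiff_const).contDiffAt
    have hN : ContDiffAt ℝ 1 (fun y : ℝ => (y + a) ^ α) x := h1.rpow_const_of_ne ht.ne'
    have hLc : ContDiffAt ℝ 1 (fun y : ℝ => Real.log (y + a)) x := h1.log ht.ne'
    have hDen : ContDiffAt ℝ 1 (fun y : ℝ => Real.log (y + a) ^ β) x :=
      hLc.rpow_const_of_ne hL0.ne'
    rw [hceq]
    exact (hN.div hDen (Real.rpow_pos_of_pos hL0 β).ne').contDiffWithinAt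
  · intro x hx
    have heq := (hderiv_c x hx).deriv
    refine ⟨heq, ?_⟩
    rw [heq]
    obtain ⟨ht, hL2⟩ := hfacts x hx
    have hL0 : 0 < Real.log (x + a) := by linarith
    apply div_pos
    · apply mul_pos (mul_pos hα (Real.rpow_pos_of_pos ht _)); linarith
    · exact Real.rpow_pos_of_pos hL0 _
  · intro x hx
    obtain ⟨ht, hL2⟩ := hfacts x hx
    have hL0 : 0 < Real.log (x + a) := by linarith
    have hD : 0 < Real.log (x + a) - ρ := by linarith
    rw [hc x, (hderiv_c x hx).deriv]
    rw [Real.rpow_sub_one ht.ne' α, Real.rpow_add_one hL0.ne' β]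
    have hA : (x + a) ^ α ≠ 0 := (Real.rpow_pos_of_pos ht α).ne'
    have hLb : Real.log (x + a) ^ β ≠ 0 := (Real.rpow_pos_of_pos hL0 β).ne'
    field_simp
    ring
  · set f : ℝ → ℝ := fun y => (y + a) / α + ρ / α * ((y + a) / (Real.log (y + a) - ρ)) with hfdef
    set f1 : ℝ → ℝ := fun y =>
      1/α + ρ/α * ((Real.log (y+a) - ρ - 1) / (Real.log (y+a) - ρ)^2) with hf1def
    have hf' : ∀ x ∈ Set.Ioi (0:ℝ), HasDerivAt f (f1 x) x := by
      intro x hx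
      obtain ⟨ht, hL2⟩ := hfacts x hx
      have hD : (0:ℝ) < Real.log (x + a) - ρ := by linarith
      have hu : HasDerivAt (fun y : ℝ => y + a) 1 x := (hasDerivAt_id x).add_const a
      have hLog : HasDerivAt (fun y : ℝ => Real.log (y + a)) (1/(x+a)) x := hu.log ht.ne'
      have hDd : HasDerivAt (fun y : ℝ => Real.log (y + a) - ρ) (1/(x+a)) x := hLog.sub_const ρ
      have hg : HasDerivAt (fun y : ℝ => (y + a) / (Real.log (y + a) - ρ))
          ((1 * (Real.log (x+a) - ρ) - (x + a) * (1/(x+a))) / (Real.log (x+a) - ρ)^2) x :=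
        hu.div hDd hD.ne'
      have h2 := (hu.div_const α).add (hg.const_mul (ρ/α))
      refine h2.congr_deriv (Eq.symm ?_)
      rw [hf1def]
      field_simp
    have hf1' : ∀ x ∈ Set.Ioi (0:ℝ), HasDerivAt f1
        (ρ/α * ((2 - (Real.log (x+a) - ρ)) / ((x+a) * (Real.log (x+a) - ρ)^3))) x := by
      intro x hx
      obtain ⟨ht, hL2⟩ := hfacts x hx
      have hD : (0:ℝ) < Real.log (x + a) - ρ := by linarith
      have hu : HasDerivAt (fun y : ℝ => y + a) 1 x := (hasDerivAt_id x).add_const a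
      have hLog : HasDerivAt (fun y : ℝ => Real.log (y + a)) (1/(x+a)) x := hu.log ht.ne'
      have hDd : HasDerivAt (fun y : ℝ => Real.log (y + a) - ρ) (1/(x+a)) x := hLog.sub_const ρ
      have hNum : HasDerivAt (fun y : ℝ => Real.log (y + a) - ρ - 1) (1/(x+a)) x :=
        hDd.sub_const 1
      have hPow : HasDerivAt (fun y : ℝ => (Real.log (y + a) - ρ)^2)
          ((2:ℕ) * (Real.log (x+a) - ρ)^(2-1) * (1/(x+a))) x := hDd.pow 2
      have hq := hNum.div hPow (pow_ne_zero 2 hD.ne')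
      have h2 := (hq.const_mul (ρ/α)).const_add (1/α)
      refine h2.congr_deriv (Eq.symm ?_)
      field_simp
      ring
    have hdf : Set.EqOn (deriv f) f1 (Set.Ioi 0) := fun x hx => (hf' x hx).deriv
    apply concaveOn_of_deriv2_nonpos (convex_Ioi 0)
    · intro x hx
      exact (hf' x hx).continuousAt.continuousWithinAt
    · rw [interior_Ioi]
      intro x hx
      exact (hf' x hx).differentiableAt.differentiableWithinAt
    · rw [interior_Ioi]
      intro x hx
      have hev : deriv f =ᶠ[nhds x] f1 :=
        Filter.eventuallyEq_of_mem (isOpen_Ioi.mem_nhds hx) hdf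
      exact ((hf1' x hx).differentiableAt.congr_of_eventuallyEq hev).differentiableWithinAt
    · rw [interior_Ioi]
      intro x hx
      have hev : deriv f =ᶠ[nhds x] f1 :=
        Filter.eventuallyEq_of_mem (isOpen_Ioi.mem_nhds hx) hdf
      have h2 : deriv (deriv f) x = deriv f1 x := hev.deriv_eq
      have h3 := (hf1' x hx).deriv
      have hD2x := hD2 x hx
      have ht := (hfacts x hx).1
      show deriv (deriv f) x ≤ 0
      rw [h2, h3]
      have hneg : (2 - (Real.log (x+a) - ρ)) / ((x+a) * (Real.log (x+a) - ρ)^3) < 0 :=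
        div_neg_of_neg_of_pos (by linarith) (by positivity)
      exact le_of_lt (mul_neg_of_pos_of_neg (by positivity) hneg)
end
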